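/- Let K be a field and a, b ∈ ℕ with gcd(a,b) = 1 and (a,b) ≠ (0,0). Then the polynomial x^a y^b − 1 ∈ K[x,y] is irreducible. -/

import Mathlib

open Polynomial

private lemma rm_pow {R : Type*} [CommRing R] [IsDomain R] {f : R[X]} (hf : f ≠ 0)
    (n : ℕ) (x : R) : rootMultiplicity x (f ^ n) = n * rootMultiplicity x f := by
  induction n with
  | zero => simp [rootMultiplicity_eq_zero]
  | succ n ih =>
    rw [pow_succ, rootMultiplicity_mul (mul_ne_zero (pow_ne_zero _ hf) hf), ih]
    ring

private lemma rm_X_pow {K : Type*} [Field K] (b : ℕ) :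
    rootMultiplicity (0 : K) ((X : K[X]) ^ b) = b := by
  rw [rm_pow X_ne_zero b 0]
  have : (X : K[X]) = X - C 0 := by simp
  rw [this, rootMultiplicity_X_sub_C_self, mul_one]

private lemma key {K : Type*} [Field K] {a b : ℕ} (ha : Odd a) (hgcd : Nat.gcd a b = 1) :
    Irreducible (Polynomial.C ((Polynomial.X : K[X]) ^ b) * Polynomial.X ^ a - 1 :
      Polynomial (Polynomial K)) := by
  set P : Polynomial (Polynomial K) := Polynomial.C ((Polynomial.X : K[X]) ^ b) * Polynomial.X ^ a - 1 with hP
  have ha0 : a ≠ 0 := by rintro rfl; simp at ha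
  have hprim : P.IsPrimitive := by
    intro r hr
    have h0 : r ∣ P.coeff 0 := (C_dvd_iff_dvd_coeff r P).mp hr 0
    have : P.coeff 0 = -1 := by
      simp [hP, coeff_X_pow, eq_comm, ha0]
    rw [this] at h0
    exact isUnit_of_dvd_unit h0 (IsUnit.neg isUnit_one)
  set F := FractionRing (Polynomial K)
  set φ := algebraMap (Polynomial K) F
  have hφ : Function.Injective φ := IsFractionRing.injective (Polynomial K) F
  have hc0 : φ ((Polynomial.X : K[X]) ^ b) ≠ 0 := by
    simp only [map_ne_zero_iff φ hφ]
    exact pow_ne_zero _ X_ne_zero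
  set c : F := φ ((Polynomial.X : K[X]) ^ b) with hc
  have hmap : P.map φ = Polynomial.C c * (Polynomial.X ^ a - Polynomial.C c⁻¹) := by
    rw [mul_sub, ← map_mul, mul_inv_cancel₀ hc0]
    simp only [hP, Polynomial.map_sub, Polynomial.map_mul, Polynomial.map_one,
      Polynomial.map_pow, map_C, map_X, map_one]
    rfl
  have hirr : Irreducible (Polynomial.X ^ a - Polynomial.C c⁻¹ : Polynomial F) := by
    apply X_pow_sub_C_irreducible_of_odd ha
    intro p hp hpa u hu
    -- u ^ p = c⁻¹, so c * u^p = 1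
    have hcu : c * u ^ p = 1 := by rw [hu, mul_inv_cancel₀ hc0]
    obtain ⟨f, g, hg, hfg⟩ := IsFractionRing.div_surjective (A := Polynomial K) u
    have hg0 : g ≠ 0 := nonZeroDivisors.ne_zero hg
    have hgF : φ g ≠ 0 := by rwa [map_ne_zero_iff φ hφ]
    have hu0 : u ≠ 0 := by
      rintro rfl
      rw [zero_pow hp.ne_zero, mul_zero] at hcu
      exact zero_ne_one hcu
    have hf0 : f ≠ 0 := by
      rintro rfl
      rw [map_zero, zero_div] at hfg
      exact hu0 hfg.symm
    have heq : Polynomial.X ^ b * f ^ p = g ^ p := by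
      apply hφ
      have : c * (φ f / φ g) ^ p = 1 := by rw [hfg]; exact hcu
      rw [div_pow, ← mul_div_assoc, div_eq_one_iff_eq (pow_ne_zero _ hgF)] at this
      rw [map_mul, map_pow, map_pow, map_pow]
      rw [hc, map_pow] at this
      exact this
    have hcount := congrArg (rootMultiplicity (0 : K)) heq
    rw [rootMultiplicity_mul (by
        exact mul_ne_zero (pow_ne_zero _ X_ne_zero) (pow_ne_zero _ hf0)),
      rm_X_pow, rm_pow hf0, rm_pow hg0] at hcount
    -- b + p * m = p * n  ⇒  p ∣ b
    have hpb : p ∣ b := by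
      have h1 : p ∣ p * rootMultiplicity (0:K) f + b := ⟨rootMultiplicity (0:K) g, by omega⟩
      exact (Nat.dvd_add_right ⟨rootMultiplicity (0:K) f, rfl⟩).mp h1
    have : p ∣ Nat.gcd a b := Nat.dvd_gcd hpa hpb
    rw [hgcd, Nat.dvd_one] at this
    exact hp.one_lt.ne' this
  apply hprim.irreducible_of_irreducible_map_of_injective hφ
  rw [hmap]
  exact (associated_unit_mul_left _ _ (isUnit_C.mpr hc0.isUnit)).symm.irreducible hirr

private lemma key_mv {K : Type*} [Field K] {a b : ℕ} (ha : Odd a) (hgcd : Nat.gcd a b = 1) :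
    Irreducible ((MvPolynomial.X 0) ^ a * (MvPolynomial.X 1) ^ b - 1 :
      MvPolynomial (Fin 2) K) := by
  set e : MvPolynomial (Fin 2) K ≃ₐ[K] Polynomial (Polynomial K) :=
    (MvPolynomial.finSuccEquiv K 1).trans
      (Polynomial.mapAlgEquiv ((MvPolynomial.finSuccEquiv K 0).trans
        (Polynomial.mapAlgEquiv (MvPolynomial.isEmptyAlgEquiv K (Fin 0))))) with he
  have h0 : e (MvPolynomial.X 0) = Polynomial.X := by
    simp [he, MvPolynomial.finSuccEquiv_X_zero]
  have h1 : e (MvPolynomial.X 1) = Polynomial.C Polynomial.X := by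
    show Polynomial.map _ ((MvPolynomial.finSuccEquiv K 1) (MvPolynomial.X 1)) = _
    rw [show (1 : Fin 2) = (0 : Fin 1).succ from rfl, MvPolynomial.finSuccEquiv_X_succ,
      Polynomial.map_C]
    simp [MvPolynomial.finSuccEquiv_X_zero]
  apply (MulEquiv.irreducible_iff e.toRingEquiv).mp
  show Irreducible (e ((MvPolynomial.X 0) ^ a * (MvPolynomial.X 1) ^ b - 1))
  rw [map_sub, map_mul, map_pow, map_pow, map_one, h0, h1, ← Polynomial.C_pow, mul_comm]
  exact key ha hgcd

theorem stmt_13 (K : Type*) [Field K] (a b : ℕ) (hgcd : Nat.gcd a b = 1)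
    (hab : ¬ (a = 0 ∧ b = 0)) :
    Irreducible ((MvPolynomial.X 0) ^ a * (MvPolynomial.X 1) ^ b - 1 :
      MvPolynomial (Fin 2) K) := by
  rcases Nat.even_or_odd a with hae | ha
  · have hb : Odd b := by
      rcases Nat.even_or_odd b with hbe | hb
      · exfalso
        have : 2 ∣ Nat.gcd a b := Nat.dvd_gcd hae.two_dvd hbe.two_dvd
        rw [hgcd] at this; omega
      · exact hb
    have hk := key_mv (K := K) hb (Nat.gcd_comm a b ▸ hgcd)
    set e := MvPolynomial.renameEquiv K (Equiv.swap (0 : Fin 2) 1) with he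
    have hmap : e ((MvPolynomial.X 0) ^ b * (MvPolynomial.X 1) ^ a - 1) =
        (MvPolynomial.X 0) ^ a * (MvPolynomial.X 1) ^ b - 1 := ?_
    · rw [← hmap]
      exact (MulEquiv.irreducible_iff e.toRingEquiv).mpr hk
    rw [map_sub, map_mul, map_pow, map_pow, map_one]
    simp only [he, MvPolynomial.renameEquiv_apply, MvPolynomial.rename_X]
    rw [Equiv.swap_apply_left, Equiv.swap_apply_right, mul_comm]
  · exact key_mv ha hgcd
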